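/- Let G1, G2 ∈ ℝ^{n×n} be symmetric positive definite matrices. Define R̂1 = chol(G1⁻¹), R̂2 = chol(G2⁻¹), R̂3 = chol((G1 + G2)⁻¹), R̂4 = chol(G1⁻¹(G1⁻¹ + G2⁻¹)⁻¹G1⁻¹), and R̂5 = chol(G2⁻¹(G1⁻¹ + G2⁻¹)⁻¹G2⁻¹). Then for every i = 1, 2, …, n: λ_i(R̂1) ≥ max{ √(λ_i(R̂3)² + λ_1(R̂4)²), √(λ_i(R̂4)² + λ_1(R̂3)²) } and λ_i(R̂2) ≥ max{ √(λ_i(R̂3)² + λ_1(R̂5)²), √(λ_i(R̂5)² + λ_1(R̂3)²) }. -/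

import Mathlib

open Matrix

noncomputable section

/-- Euclidean norm of a real vector. -/
def euclNorm {m : ℕ} (x : Fin m → ℝ) : ℝ := Real.sqrt (∑ k, x k ^ 2)

/-- The lattice vector `A z` for an integer vector `z`. -/
def latticeVec {m n : ℕ} (A : Matrix (Fin m) (Fin n) ℝ) (z : Fin n → ℤ) : Fin m → ℝ :=
  A.mulVec fun k => (z k : ℝ)

/-- The `i`-th successive minimum of the lattice generated by `A`: the smallest `r ≥ 0` such
that the closed ball of radius `r` centered at the origin contains `i` linearly independent
lattice vectors. -/
def succMin {m n : ℕ} (A : Matrix (Fin m) (Fin n) ℝ) (i : ℕ) : ℝ :=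
  sInf {r : ℝ | 0 ≤ r ∧ ∃ v : Fin i → (Fin n → ℤ),
    LinearIndependent ℝ (fun j => latticeVec A (v j)) ∧
    ∀ j, euclNorm (latticeVec A (v j)) ≤ r}

/-- `R` is the Cholesky factor of `G`: `R` is upper triangular with positive diagonal
entries and `Rᵀ * R = G`. -/
def IsCholesky {n : ℕ} (G R : Matrix (Fin n) (Fin n) ℝ) : Prop :=
  R.BlockTriangular id ∧ (∀ j, 0 < R j j) ∧ Rᵀ * R = G

-- aux lemmas
lemma euclNorm_nonneg {m : ℕ} (x : Fin m → ℝ) : 0 ≤ euclNorm x := Real.sqrt_nonneg _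

lemma euclNorm_sq {m : ℕ} (x : Fin m → ℝ) : euclNorm x ^ 2 = ∑ k, x k ^ 2 :=
  Real.sq_sqrt (Finset.sum_nonneg fun k _ => sq_nonneg _)

lemma sq_sum_mulVec {n : ℕ} (A : Matrix (Fin n) (Fin n) ℝ) (x : Fin n → ℝ) :
    ∑ k, (A *ᵥ x) k ^ 2 = x ⬝ᵥ (Aᵀ * A) *ᵥ x := by
  rw [← Matrix.mulVec_mulVec, Matrix.dotProduct_mulVec, Matrix.vecMul_transpose]
  simp [dotProduct, sq]

lemma euclNorm_lattice_sq {n : ℕ} (A : Matrix (Fin n) (Fin n) ℝ) (z : Fin n → ℤ) :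
    euclNorm (latticeVec A z) ^ 2 = (fun k => (z k : ℝ)) ⬝ᵥ (Aᵀ * A) *ᵥ (fun k => (z k : ℝ)) := by
  rw [euclNorm_sq, latticeVec, sq_sum_mulVec]

lemma key_inv {n : ℕ} (G1 G2 : Matrix (Fin n) (Fin n) ℝ)
    (hG1 : G1.PosDef) (hG2 : G2.PosDef) :
    G1⁻¹ = (G1 + G2)⁻¹ + G1⁻¹ * (G1⁻¹ + G2⁻¹)⁻¹ * G1⁻¹ := by
  have h1 : IsUnit G1.det := isUnit_iff_ne_zero.mpr (ne_of_gt hG1.det_pos)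
  have h2 : IsUnit G2.det := isUnit_iff_ne_zero.mpr (ne_of_gt hG2.det_pos)
  have hS : (G1 + G2).PosDef := hG1.add hG2
  have hSdet : IsUnit (G1 + G2).det := isUnit_iff_ne_zero.mpr (ne_of_gt hS.det_pos)
  have hT : G1⁻¹ + G2⁻¹ = G1⁻¹ * (G1 + G2) * G2⁻¹ := by
    rw [Matrix.mul_add, Matrix.add_mul, Matrix.nonsing_inv_mul _ h1, Matrix.one_mul,
      Matrix.mul_assoc, Matrix.mul_nonsing_inv _ h2, Matrix.mul_one, add_comm]
  have hTinv : (G1⁻¹ + G2⁻¹)⁻¹ = G2 * (G1 + G2)⁻¹ * G1 := by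
    rw [hT, Matrix.mul_inv_rev, Matrix.mul_inv_rev, Matrix.nonsing_inv_nonsing_inv _ h2,
      Matrix.nonsing_inv_nonsing_inv _ h1, Matrix.mul_assoc]
  rw [hTinv]
  have : G1⁻¹ * (G2 * (G1 + G2)⁻¹ * G1) * G1⁻¹ = G1⁻¹ * G2 * (G1 + G2)⁻¹ := by
    simp only [Matrix.mul_assoc]
    rw [Matrix.mul_nonsing_inv _ h1, Matrix.mul_one]
  rw [this]
  calc G1⁻¹ = G1⁻¹ * (G1 + G2) * (G1 + G2)⁻¹ := by
        rw [Matrix.mul_assoc, Matrix.mul_nonsing_inv _ hSdet, Matrix.mul_one]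
    _ = (G1 + G2)⁻¹ + G1⁻¹ * G2 * (G1 + G2)⁻¹ := by
        rw [Matrix.mul_add, Matrix.add_mul, Matrix.nonsing_inv_mul _ h1, Matrix.one_mul]


lemma chol_isUnit {n : ℕ} {G R : Matrix (Fin n) (Fin n) ℝ} (h : IsCholesky G R) :
    IsUnit R := by
  rw [Matrix.isUnit_iff_isUnit_det, isUnit_iff_ne_zero,
    Matrix.det_of_upperTriangular h.1]
  exact ne_of_gt (Finset.prod_pos fun j _ => h.2.1 j)

lemma lattice_ne_zero {n : ℕ} {A : Matrix (Fin n) (Fin n) ℝ} (hA : IsUnit A)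
    {z : Fin n → ℤ} (hz : (fun k => (z k : ℝ)) ≠ 0) : latticeVec A z ≠ 0 := by
  intro h
  apply hz
  have := Matrix.mulVec_injective_iff_isUnit.mpr hA (a₁ := fun k => (z k : ℝ)) (a₂ := 0)
  rw [Matrix.mulVec_zero] at this
  exact this h

lemma succMin_nonneg {m n : ℕ} (A : Matrix (Fin m) (Fin n) ℝ) (i : ℕ) :
    0 ≤ succMin A i :=
  Real.sInf_nonneg fun _ hx => hx.1

lemma succMin_le {n i : ℕ} (A : Matrix (Fin n) (Fin n) ℝ) {r : ℝ} (hr : 0 ≤ r)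
    (v : Fin i → (Fin n → ℤ))
    (hli : LinearIndependent ℝ (fun j => latticeVec A (v j)))
    (hb : ∀ j, euclNorm (latticeVec A (v j)) ≤ r) :
    succMin A i ≤ r :=
  csInf_le ⟨0, fun _ hx => hx.1⟩ ⟨hr, v, hli, hb⟩

lemma succMin_one_le {n : ℕ} {A : Matrix (Fin n) (Fin n) ℝ} (hA : IsUnit A)
    {z : Fin n → ℤ} (hz : (fun k => (z k : ℝ)) ≠ 0) :
    succMin A 1 ≤ euclNorm (latticeVec A z) := by
  refine succMin_le A (euclNorm_nonneg _) (fun _ => z) ?_ (fun _ => le_refl _)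
  exact linearIndependent_unique_iff.mpr (lattice_ne_zero hA hz)

lemma setNonempty {n i : ℕ} (A : Matrix (Fin n) (Fin n) ℝ) (hA : IsUnit A) (hin : i ≤ n) :
    Set.Nonempty {r : ℝ | 0 ≤ r ∧ ∃ v : Fin i → (Fin n → ℤ),
      LinearIndependent ℝ (fun j => latticeVec A (v j)) ∧
      ∀ j, euclNorm (latticeVec A (v j)) ≤ r} := by
  set v : Fin i → (Fin n → ℤ) := fun j k => if k = Fin.castLE hin j then 1 else 0 with hv
  have heq : ∀ j, latticeVec A (v j) = Aᵀ (Fin.castLE hin j) := by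
    intro j; funext l
    simp [latticeVec, Matrix.mulVec, dotProduct, hv, apply_ite (Int.cast : ℤ → ℝ),
      mul_ite, mul_one, mul_zero]
  have hli : LinearIndependent ℝ (fun j => latticeVec A (v j)) := by
    have hcols := (Matrix.linearIndependent_cols_iff_isUnit.mpr hA).comp _
      (Fin.castLE_injective hin)
    have : (fun j => latticeVec A (v j)) = fun j => Aᵀ (Fin.castLE hin j) := funext heq
    rw [this]; exact hcols
  refine ⟨∑ j, euclNorm (latticeVec A (v j)), ⟨Finset.sum_nonneg fun j _ => euclNorm_nonneg _,
    v, hli, fun j => ?_⟩⟩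
  exact Finset.single_le_sum (f := fun j => euclNorm (latticeVec A (v j))) (fun j _ => euclNorm_nonneg _) (Finset.mem_univ j)

lemma core {n : ℕ} {A B C : Matrix (Fin n) (Fin n) ℝ}
    (hA : IsUnit A) (hB : IsUnit B) (hC : IsUnit C)
    (hid : ∀ z : Fin n → ℤ, euclNorm (latticeVec A z) ^ 2
      = euclNorm (latticeVec B z) ^ 2 + euclNorm (latticeVec C z) ^ 2)
    {i : ℕ} (hi : 1 ≤ i) (hin : i ≤ n) :
    Real.sqrt (succMin B i ^ 2 + succMin C 1 ^ 2) ≤ succMin A i := by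
  refine le_csInf (setNonempty A hA hin) ?_
  rintro r ⟨hr, v, hli, hb⟩
  set l1 := succMin C 1 with hl1def
  have hl1 : 0 ≤ l1 := succMin_nonneg C 1
  have hBle : ∀ j, euclNorm (latticeVec B (v j)) ^ 2 ≤ r ^ 2 - l1 ^ 2 := by
    intro j
    have hnz : latticeVec A (v j) ≠ 0 := hli.ne_zero j
    have hz : (fun k => ((v j k : ℤ) : ℝ)) ≠ 0 := by
      intro h
      apply hnz
      show A.mulVec _ = 0
      rw [h, Matrix.mulVec_zero]
    have h1 : l1 ≤ euclNorm (latticeVec C (v j)) := succMin_one_le hC hz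
    have h2 : euclNorm (latticeVec A (v j)) ^ 2 ≤ r ^ 2 :=
      pow_le_pow_left₀ (euclNorm_nonneg _) (hb j) 2
    have h3 : l1 ^ 2 ≤ euclNorm (latticeVec C (v j)) ^ 2 := pow_le_pow_left₀ hl1 h1 2
    have h4 := hid (v j)
    linarith
  have hsub : 0 ≤ r ^ 2 - l1 ^ 2 :=
    le_trans (sq_nonneg _) (hBle ⟨0, hi⟩)
  have hBli : LinearIndependent ℝ (fun j => latticeVec B (v j)) := by
    have hcomp : (fun j => latticeVec A (v j))
        = (A.mulVecLin ∘ fun j => (fun k => ((v j k : ℤ) : ℝ))) := by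
      funext j; simp [latticeVec, Function.comp, Matrix.mulVecLin_apply]
    rw [hcomp] at hli
    have hzli := hli.of_comp A.mulVecLin
    have h2 := hzli.map' B.mulVecLin
      (LinearMap.ker_eq_bot.mpr (Matrix.mulVec_injective_iff_isUnit.mpr hB))
    have hcomp2 : (fun j => latticeVec B (v j))
        = (B.mulVecLin ∘ fun j => (fun k => ((v j k : ℤ) : ℝ))) := by
      funext j; simp [latticeVec, Function.comp, Matrix.mulVecLin_apply]
    rw [hcomp2]
    exact h2
  have hmem : succMin B i ≤ Real.sqrt (r ^ 2 - l1 ^ 2) :=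
    succMin_le B (Real.sqrt_nonneg _) v hBli (fun j =>
      (Real.le_sqrt (euclNorm_nonneg _) hsub).mpr (hBle j))
  have hB2 : succMin B i ^ 2 ≤ r ^ 2 - l1 ^ 2 := by
    have := pow_le_pow_left₀ (succMin_nonneg B i) hmem 2
    rwa [Real.sq_sqrt hsub] at this
  calc Real.sqrt (succMin B i ^ 2 + l1 ^ 2) ≤ Real.sqrt (r ^ 2) :=
        Real.sqrt_le_sqrt (by linarith)
    _ = r := Real.sqrt_sq hr

lemma hid_of {n : ℕ} {GA GB GC RA RB RC : Matrix (Fin n) (Fin n) ℝ}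
    (hA : IsCholesky GA RA) (hB : IsCholesky GB RB) (hC : IsCholesky GC RC)
    (hsum : GA = GB + GC) :
    ∀ z : Fin n → ℤ, euclNorm (latticeVec RA z) ^ 2
      = euclNorm (latticeVec RB z) ^ 2 + euclNorm (latticeVec RC z) ^ 2 := by
  intro z
  rw [euclNorm_lattice_sq, euclNorm_lattice_sq, euclNorm_lattice_sq,
    hA.2.2, hB.2.2, hC.2.2, hsum, Matrix.add_mulVec, dotProduct_add]


theorem statement3 {n : ℕ} (G1 G2 : Matrix (Fin n) (Fin n) ℝ)
    (hG1 : G1.PosDef) (hG2 : G2.PosDef)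
    (Rh1 Rh2 Rh3 Rh4 Rh5 : Matrix (Fin n) (Fin n) ℝ)
    (hRh1 : IsCholesky G1⁻¹ Rh1) (hRh2 : IsCholesky G2⁻¹ Rh2)
    (hRh3 : IsCholesky (G1 + G2)⁻¹ Rh3)
    (hRh4 : IsCholesky (G1⁻¹ * (G1⁻¹ + G2⁻¹)⁻¹ * G1⁻¹) Rh4)
    (hRh5 : IsCholesky (G2⁻¹ * (G1⁻¹ + G2⁻¹)⁻¹ * G2⁻¹) Rh5) :
    ∀ i : ℕ, 1 ≤ i → i ≤ n →
      succMin Rh1 i ≥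
        max (Real.sqrt (succMin Rh3 i ^ 2 + succMin Rh4 1 ^ 2))
            (Real.sqrt (succMin Rh4 i ^ 2 + succMin Rh3 1 ^ 2)) ∧
      succMin Rh2 i ≥
        max (Real.sqrt (succMin Rh3 i ^ 2 + succMin Rh5 1 ^ 2))
            (Real.sqrt (succMin Rh5 i ^ 2 + succMin Rh3 1 ^ 2)) := by
  intro i hi hin
  have u1 := chol_isUnit hRh1
  have u2 := chol_isUnit hRh2
  have u3 := chol_isUnit hRh3
  have u4 := chol_isUnit hRh4
  have u5 := chol_isUnit hRh5
  have hidA := hid_of hRh1 hRh3 hRh4 (key_inv G1 G2 hG1 hG2)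
  have hidA' : ∀ z : Fin n → ℤ, euclNorm (latticeVec Rh1 z) ^ 2
      = euclNorm (latticeVec Rh4 z) ^ 2 + euclNorm (latticeVec Rh3 z) ^ 2 := by
    intro z; rw [hidA z, add_comm]
  have hkey2 : G2⁻¹ = (G1 + G2)⁻¹ + G2⁻¹ * (G1⁻¹ + G2⁻¹)⁻¹ * G2⁻¹ := by
    have := key_inv G2 G1 hG2 hG1
    rwa [add_comm G2 G1, add_comm G2⁻¹ G1⁻¹] at this
  have hidB := hid_of hRh2 hRh3 hRh5 hkey2
  have hidB' : ∀ z : Fin n → ℤ, euclNorm (latticeVec Rh2 z) ^ 2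
      = euclNorm (latticeVec Rh5 z) ^ 2 + euclNorm (latticeVec Rh3 z) ^ 2 := by
    intro z; rw [hidB z, add_comm]
  constructor
  · exact max_le (core u1 u3 u4 hidA hi hin) (core u1 u4 u3 hidA' hi hin)
  · exact max_le (core u2 u3 u5 hidB hi hin) (core u2 u5 u3 hidB' hi hin)
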